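/- With P the countable poset constructed above, the poset M = {⋂_{x∈E} ↓x : E ⊆ P} of all intersections of principal ideals of P, ordered by inclusion, is a bounded complete dcpo (every directed subset has a supremum, and every subset bounded above has a supremum), and M is countable. -/

import Mathlib

/-- Nonempty finite sequences of positive natural numbers. -/
def FinSeq : Type := {l : List ℕ+ // l ≠ []}

/-- The poset `L = ℕ ∪ ℕ^{<ℕ} ∪ {⊤}`: the positive naturals with their usual order,
the nonempty finite sequences with the prefix order, a top element `⊤` above everything,
and no other relations. -/
inductive LL where
  | nat : ℕ+ → LL
  | seq : FinSeq → LL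
  | top : LL

/-- The order on `L`. -/
def LL.le : LL → LL → Prop
  | _, .top => True
  | .nat m, .nat n => m ≤ n
  | .seq s, .seq t => s.1 <+: t.1
  | _, _ => False

theorem LL.nat_le_nat (m n : ℕ+) : LL.le (.nat m) (.nat n) ↔ m ≤ n := Iff.rfl

theorem LL.seq_le_seq (s t : FinSeq) : LL.le (.seq s) (.seq t) ↔ s.1 <+: t.1 := Iff.rfl

instance : PartialOrder LL where
  le := LL.le
  le_refl x := by
    cases x with
    | nat n => exact (LL.nat_le_nat n n).2 (le_refl n)
    | seq s => exact (LL.seq_le_seq s s).2 (List.prefix_refl _)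
    | top => trivial
  le_trans x y z h g := by
    cases x <;> cases y <;> cases z <;>
      first
        | trivial
        | exact (h : False).elim
        | exact (g : False).elim
        | exact (LL.nat_le_nat _ _).2
            (le_trans ((LL.nat_le_nat _ _).1 h) ((LL.nat_le_nat _ _).1 g))
        | exact (LL.seq_le_seq _ _).2
            (List.IsPrefix.trans ((LL.seq_le_seq _ _).1 h) ((LL.seq_le_seq _ _).1 g))
  le_antisymm x y h g := by
    cases x <;> cases y <;>
      first
        | rfl
        | exact (h : False).elim
        | exact (g : False).elim
        | exact congrArg LL.nat (le_antisymm ((LL.nat_le_nat _ _).1 h) ((LL.nat_le_nat _ _).1 g))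
        | exact congrArg LL.seq (Subtype.ext (List.IsPrefix.eq_of_length ((LL.seq_le_seq _ _).1 h)
            (Nat.le_antisymm (List.IsPrefix.length_le ((LL.seq_le_seq _ _).1 h))
              (List.IsPrefix.length_le ((LL.seq_le_seq _ _).1 g)))))

/-- The underlying set of the construction: `P = ℕ × L`. -/
abbrev PP : Type := ℕ+ × LL

/-- The singleton sequence, identifying a positive natural with a length-one sequence. -/
def FinSeq.single (a : ℕ+) : FinSeq := ⟨[a], by simp⟩

/-- Append a letter to a finite sequence: `s.x`. -/
def FinSeq.snoc (s : FinSeq) (a : ℕ+) : FinSeq := ⟨s.1 ++ [a], by simp⟩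

/-- The data of the construction: pairwise disjoint infinite sets `i m n ⊆ ℕ` (for `m < n`)
with strict lower bound `n`, and monotone bijections `f m n : ℕ^{<ℕ} → i m n`. -/
structure GoodData (i : ℕ+ → ℕ+ → Set ℕ+) (f : ℕ+ → ℕ+ → FinSeq → ℕ+) : Prop where
  infinite : ∀ m n : ℕ+, m < n → (i m n).Infinite
  lower : ∀ m n : ℕ+, m < n → ∀ k ∈ i m n, n < k
  disjoint : ∀ m₁ n₁ m₂ n₂ : ℕ+, m₁ < n₁ → m₂ < n₂ → (m₁, n₁) ≠ (m₂, n₂) →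
    i m₁ n₁ ∩ i m₂ n₂ = ∅
  mono : ∀ m n : ℕ+, m < n → ∀ s t : FinSeq, s.1 <+: t.1 → f m n s ≤ f m n t
  inj : ∀ m n : ℕ+, m < n → Function.Injective (f m n)
  range : ∀ m n : ℕ+, m < n → Set.range (f m n) = i m n

/-- `(n,x) <₁ (m,y)` iff `n = m` and `x < y` in `L`. -/
def lt1 (x y : PP) : Prop := x.1 = y.1 ∧ LL.le x.2 y.2 ∧ x.2 ≠ y.2

/-- `(n,x) <₂ (m,⊤)` iff `x ∈ ℕ^{<ℕ}` and there is `k > n` with `m ∈ i(n,k)` and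
`m = f_{n,k}(x)`. -/
def lt2 (i : ℕ+ → ℕ+ → Set ℕ+) (f : ℕ+ → ℕ+ → FinSeq → ℕ+) (x y : PP) : Prop :=
  y.2 = LL.top ∧ ∃ s : FinSeq, x.2 = LL.seq s ∧
    ∃ k : ℕ+, x.1 < k ∧ y.1 ∈ i x.1 k ∧ y.1 = f x.1 k s

/-- `(n,x) <₃ (m,⊤)` iff `x ∈ ℕ` and there is `d < n` with `m ∈ i(d,n)` and
`m = f_{d,n}(x)`. -/
def lt3 (i : ℕ+ → ℕ+ → Set ℕ+) (f : ℕ+ → ℕ+ → FinSeq → ℕ+) (x y : PP) : Prop :=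
  y.2 = LL.top ∧ ∃ a : ℕ+, x.2 = LL.nat a ∧
    ∃ d : ℕ+, d < x.1 ∧ y.1 ∈ i d x.1 ∧ y.1 = f d x.1 (FinSeq.single a)

/-- `(n,x) <₄ (m,⊤)` iff `x ∈ ℕ` and there are `a < b` and `s` with `f_{a,b}(s) = n` and
`f_{a,b}(s.x) = m`. -/
def lt4 (f : ℕ+ → ℕ+ → FinSeq → ℕ+) (x y : PP) : Prop :=
  y.2 = LL.top ∧ ∃ a : ℕ+, x.2 = LL.nat a ∧ ∃ p q : ℕ+, ∃ s : FinSeq,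
    p < q ∧ f p q s = x.1 ∧ f p q (FinSeq.snoc s a) = y.1

/-- The strict order `< = <₁ ∪ <₂ ∪ <₃ ∪ <₄ ∪ <₁;<₂ ∪ <₁;<₃ ∪ <₁;<₄`. -/
def Plt (i : ℕ+ → ℕ+ → Set ℕ+) (f : ℕ+ → ℕ+ → FinSeq → ℕ+) (x y : PP) : Prop :=
  lt1 x y ∨ lt2 i f x y ∨ lt3 i f x y ∨ lt4 f x y ∨
    (∃ z, lt1 x z ∧ lt2 i f z y) ∨ (∃ z, lt1 x z ∧ lt3 i f z y) ∨ (∃ z, lt1 x z ∧ lt4 f z y)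

/-- The order `≤ = < ∪ =` on `P`. -/
def Ple (i : ℕ+ → ℕ+ → Set ℕ+) (f : ℕ+ → ℕ+ → FinSeq → ℕ+) (x y : PP) : Prop :=
  Plt i f x y ∨ x = y

/-- Upper set with respect to a relation. -/
def RelUpperSet' {α : Type*} (r : α → α → Prop) (U : Set α) : Prop :=
  ∀ ⦃a b⦄, r a b → a ∈ U → b ∈ U

/-- Directedness with respect to a relation. -/
def RelDirectedOn {α : Type*} (r : α → α → Prop) (d : Set α) : Prop :=
  ∀ x ∈ d, ∀ y ∈ d, ∃ z ∈ d, r x z ∧ r y z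

/-- Least upper bound with respect to a relation. -/
def RelIsLUB {α : Type*} (r : α → α → Prop) (d : Set α) (a : α) : Prop :=
  (∀ x ∈ d, r x a) ∧ ∀ b, (∀ x ∈ d, r x b) → r a b

/-- Scott openness with respect to a relation: an upper set inaccessible by suprema of
directed sets. -/
def RelScottOpen {α : Type*} (r : α → α → Prop) (U : Set α) : Prop :=
  RelUpperSet' r U ∧ ∀ d : Set α, d.Nonempty → RelDirectedOn r d →
    ∀ a, RelIsLUB r d a → a ∈ U → (d ∩ U).Nonempty

/-- `M`: the collection of all intersections of principal ideals of `P`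
(for `E = ∅` the intersection is all of `P`). -/
def MM (i : ℕ+ → ℕ+ → Set ℕ+) (f : ℕ+ → ℕ+ → FinSeq → ℕ+) : Set (Set PP) :=
  {S | ∃ E : Set PP, S = ⋂ x ∈ E, {y : PP | Ple i f y x}}


/-! ### Auxiliary machinery -/

section Aux

instance : Countable FinSeq := inferInstanceAs (Countable {l : List ℕ+ // l ≠ []})

/-- Encoding of `LL` into a countable type. -/
def LL.enc : LL → ℕ+ ⊕ FinSeq ⊕ Unit
  | .nat n => .inl n
  | .seq s => .inr (.inl s)
  | .top => .inr (.inr ())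

instance : Countable LL := by
  have hinj : Function.Injective LL.enc := by
    intro a b hab
    cases a <;> cases b <;> simp_all [LL.enc]
  exact hinj.countable

theorem LL.le_top' (z : LL) : LL.le z .top := by cases z <;> trivial

theorem LL.le_refl' (z : LL) : LL.le z z := le_refl z

theorem LL.le_trans' {a b c : LL} (h1 : LL.le a b) (h2 : LL.le b c) : LL.le a c :=
  le_trans (α := LL) h1 h2

theorem LL.le_nat_iff (z : LL) (a : ℕ+) : LL.le z (.nat a) ↔ ∃ b, z = .nat b ∧ b ≤ a := by
  cases z <;> simp [LL.le]

theorem LL.le_seq_iff (z : LL) (s : FinSeq) :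
    LL.le z (.seq s) ↔ ∃ t, z = .seq t ∧ t.1 <+: s.1 := by
  cases z <;> simp [LL.le]

theorem LL.top_le_iff (z : LL) : LL.le .top z ↔ z = .top := by
  cases z <;> simp [LL.le]

/-- The principal downset in `L`. -/
def ldown (w : LL) : Set LL := {z | LL.le z w}

theorem ldown_top : ldown .top = Set.univ := by
  ext z; simp [ldown, LL.le_top']

theorem self_mem_ldown (w : LL) : w ∈ ldown w := LL.le_refl' w

theorem ldown_finite {w : LL} (hw : w ≠ .top) : (ldown w).Finite := by
  cases w with
  | top => exact absurd rfl hw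
  | nat a =>
    apply Set.Finite.subset ((Set.finite_Iic a).image LL.nat)
    intro z hz
    obtain ⟨b, rfl, hb⟩ := (LL.le_nat_iff z a).1 hz
    exact ⟨b, hb, rfl⟩
  | seq s =>
    have h1 : {t : List ℕ+ | t <+: s.1}.Finite := by
      apply Set.Finite.subset s.1.inits.toFinset.finite_toSet
      intro t ht
      simp only [List.coe_toFinset, Set.mem_setOf_eq, List.mem_inits]
      exact ht
    have h2 : {t : FinSeq | t.1 <+: s.1}.Finite := by
      have := h1.preimage (f := fun t : FinSeq => t.1) (Set.injOn_of_injective Subtype.val_injective)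
      exact this
    apply Set.Finite.subset (h2.image LL.seq)
    intro z hz
    obtain ⟨t, rfl, ht⟩ := (LL.le_seq_iff z s).1 hz
    exact ⟨t, ht, rfl⟩

theorem ldown_comparable {w : LL} (hw : w ≠ .top) {a b : LL}
    (ha : LL.le a w) (hb : LL.le b w) : LL.le a b ∨ LL.le b a := by
  cases w with
  | top => exact absurd rfl hw
  | nat c =>
    obtain ⟨a', rfl, ha'⟩ := (LL.le_nat_iff a c).1 ha
    obtain ⟨b', rfl, hb'⟩ := (LL.le_nat_iff b c).1 hb
    rcases le_total a' b' with h | h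
    · exact Or.inl h
    · exact Or.inr h
  | seq s =>
    obtain ⟨a', rfl, ha'⟩ := (LL.le_seq_iff a s).1 ha
    obtain ⟨b', rfl, hb'⟩ := (LL.le_seq_iff b s).1 hb
    rcases List.prefix_or_prefix_of_prefix ha' hb' with h | h
    · exact Or.inl h
    · exact Or.inr h

variable (i : ℕ+ → ℕ+ → Set ℕ+) (f : ℕ+ → ℕ+ → FinSeq → ℕ+)

/-- Intersections of families of members of `M` are members of `M`. -/
theorem sInter_mem_MM (𝒜 : Set (Set PP)) (h𝒜 : ∀ T ∈ 𝒜, T ∈ MM i f) :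
    ⋂₀ 𝒜 ∈ MM i f := by
  refine ⟨{x | ∀ y ∈ ⋂₀ 𝒜, Ple i f y x}, ?_⟩
  apply Set.Subset.antisymm
  · intro y hy
    simp only [Set.mem_iInter, Set.mem_setOf_eq]
    intro x hx
    exact hx y hy
  · intro z hz
    intro T hT
    obtain ⟨E, hE⟩ := h𝒜 T hT
    rw [hE]
    simp only [Set.mem_iInter, Set.mem_setOf_eq]
    intro x hx
    have hxub : x ∈ {x | ∀ y ∈ ⋂₀ 𝒜, Ple i f y x} := by
      intro y hy
      have hyT : y ∈ T := hy T hT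
      rw [hE] at hyT
      simp only [Set.mem_iInter, Set.mem_setOf_eq] at hyT
      exact hyT x hx
    simp only [Set.mem_iInter, Set.mem_setOf_eq] at hz
    exact hz x hxub

/-- Every subset of `M` has a least upper bound. -/
theorem MM_exists_lub (D : Set ↥(MM i f)) : ∃ a : ↥(MM i f), IsLUB D a := by
  have hmem : (⋂₀ {T | T ∈ MM i f ∧ ∀ s ∈ D, (s : Set PP) ⊆ T}) ∈ MM i f :=
    sInter_mem_MM i f _ (fun T hT => hT.1)
  refine ⟨⟨_, hmem⟩, fun s hs => ?_, fun b hb => ?_⟩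
  · show (s : Set PP) ⊆ _
    intro y hy
    exact Set.mem_sInter.2 (fun T hT => hT.2 s hs hy)
  · show (⋂₀ _ : Set PP) ⊆ (b : Set PP)
    exact Set.sInter_subset_of_mem ⟨b.2, fun s hs => hb hs⟩


theorem FinSeq.single_inj {a b : ℕ+} (h : FinSeq.single a = FinSeq.single b) : a = b := by
  have := congrArg Subtype.val h
  simpa [FinSeq.single] using this

theorem FinSeq.snoc_inj {s t : FinSeq} {a b : ℕ+} (h : FinSeq.snoc s a = FinSeq.snoc t b) :
    s = t ∧ a = b := by
  have h' : s.1 ++ [a] = t.1 ++ [b] := congrArg Subtype.val h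
  obtain ⟨h1, h2⟩ := List.append_inj' h' (by simp)
  exact ⟨Subtype.ext h1, by simpa using h2⟩

/-- Uniqueness of the representation of an element of any `i p k` as a value of `f p k`. -/
theorem GoodData.uniq (h : GoodData i f) {n p k p' k' : ℕ+} {s s' : FinSeq}
    (h1 : p < k) (h2 : n ∈ i p k) (h3 : f p k s = n)
    (h1' : p' < k') (h2' : n ∈ i p' k') (h3' : f p' k' s' = n) :
    p = p' ∧ k = k' ∧ s = s' := by
  have hpk : (p, k) = (p', k') := by
    by_contra hne
    have hd := h.disjoint p k p' k' h1 h1' hne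
    have hnn : n ∈ i p k ∩ i p' k' := ⟨h2, h2'⟩
    rw [hd] at hnn
    exact hnn
  have hp : p = p' := congrArg Prod.fst hpk
  have hk : k = k' := congrArg Prod.snd hpk
  subst hp; subst hk
  exact ⟨rfl, rfl, h.inj p k h1 (h3.trans h3'.symm)⟩

theorem plt_of_le {z w : LL} {c : ℕ+} {y : PP} (hzw : LL.le z w)
    (hlt : lt2 i f (c, w) y ∨ lt3 i f (c, w) y ∨ lt4 f (c, w) y) : Plt i f (c, z) y := by
  by_cases hne : z = w
  · subst hne
    rcases hlt with hl | hl | hl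
    · exact Or.inr (Or.inl hl)
    · exact Or.inr (Or.inr (Or.inl hl))
    · exact Or.inr (Or.inr (Or.inr (Or.inl hl)))
  · have h1 : lt1 (c, z) (c, w) := ⟨rfl, hzw, hne⟩
    rcases hlt with hl | hl | hl
    · exact Or.inr (Or.inr (Or.inr (Or.inr (Or.inl ⟨(c, w), h1, hl⟩))))
    · exact Or.inr (Or.inr (Or.inr (Or.inr (Or.inr (Or.inl ⟨(c, w), h1, hl⟩)))))
    · exact Or.inr (Or.inr (Or.inr (Or.inr (Or.inr (Or.inr ⟨(c, w), h1, hl⟩)))))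

theorem ple_nontop_iff {x2 : LL} (hx : x2 ≠ .top) (n c : ℕ+) (z : LL) :
    Ple i f (c, z) (n, x2) ↔ c = n ∧ LL.le z x2 := by
  constructor
  · rintro (hlt | heq)
    · rcases hlt with hl | hl | hl | hl | ⟨zm, h1, h2⟩ | ⟨zm, h1, h2⟩ | ⟨zm, h1, h2⟩
      · exact ⟨hl.1, hl.2.1⟩
      · exact absurd hl.1 hx
      · exact absurd hl.1 hx
      · exact absurd hl.1 hx
      · exact absurd h2.1 hx
      · exact absurd h2.1 hx
      · exact absurd h2.1 hx
    · have h1 : c = n := congrArg Prod.fst heq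
      have h2 : z = x2 := congrArg Prod.snd heq
      exact ⟨h1, by rw [h2]; exact LL.le_refl' x2⟩
  · rintro ⟨rfl, hz⟩
    by_cases hne : z = x2
    · exact Or.inr (by rw [hne])
    · exact Or.inl (Or.inl ⟨rfl, hz, hne⟩)

theorem ple_top_iff (n c : ℕ+) (hc : c ≠ n) (z : LL) :
    Ple i f (c, z) (n, .top) ↔
      (∃ (s : FinSeq) (k : ℕ+), LL.le z (.seq s) ∧ c < k ∧ n ∈ i c k ∧ f c k s = n) ∨
      (∃ (a d : ℕ+), LL.le z (.nat a) ∧ d < c ∧ n ∈ i d c ∧ f d c (FinSeq.single a) = n) ∨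
      (∃ (a p q : ℕ+) (s : FinSeq), LL.le z (.nat a) ∧ p < q ∧ f p q s = c ∧
        f p q (FinSeq.snoc s a) = n) := by
  constructor
  · rintro (hlt | heq)
    · rcases hlt with hl | hl | hl | hl | ⟨zm, h1, h2⟩ | ⟨zm, h1, h2⟩ | ⟨zm, h1, h2⟩
      · exact absurd hl.1 hc
      · obtain ⟨-, s, hzs, k, hck, hm, hf⟩ := hl
        have hzs' : z = LL.seq s := hzs
        exact Or.inl ⟨s, k, by rw [hzs']; exact LL.le_refl' _, hck, hm, hf.symm⟩
      · obtain ⟨-, a, hza, d, hd, hm, hf⟩ := hl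
        have hza' : z = LL.nat a := hza
        exact Or.inr (Or.inl ⟨a, d, by rw [hza']; exact LL.le_refl' _, hd, hm, hf.symm⟩)
      · obtain ⟨-, a, hza, p, q, s, hpq, hfc, hfn⟩ := hl
        have hza' : z = LL.nat a := hza
        exact Or.inr (Or.inr ⟨a, p, q, s, by rw [hza']; exact LL.le_refl' _, hpq, hfc, hfn⟩)
      · obtain ⟨hfst, hle, -⟩ := h1
        obtain ⟨-, s, hzm2, k, hk, hm, hf⟩ := h2
        rw [← hfst] at hk hm hf
        rw [hzm2] at hle
        exact Or.inl ⟨s, k, hle, hk, hm, hf.symm⟩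
      · obtain ⟨hfst, hle, -⟩ := h1
        obtain ⟨-, a, hzm2, d, hd, hm, hf⟩ := h2
        rw [← hfst] at hd hm hf
        rw [hzm2] at hle
        exact Or.inr (Or.inl ⟨a, d, hle, hd, hm, hf.symm⟩)
      · obtain ⟨hfst, hle, -⟩ := h1
        obtain ⟨-, a, hzm2, p, q, s, hpq, hfc, hfn⟩ := h2
        rw [← hfst] at hfc
        rw [hzm2] at hle
        exact Or.inr (Or.inr ⟨a, p, q, s, hle, hpq, hfc, hfn⟩)
    · exact absurd (congrArg Prod.fst heq) hc
  · rintro (⟨s, k, hz, h1, h2, h3⟩ | ⟨a, d, hz, h1, h2, h3⟩ | ⟨a, p, q, s, hz, h1, h2, h3⟩)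
    · exact Or.inl (plt_of_le i f hz (Or.inl ⟨rfl, s, rfl, k, h1, h2, h3.symm⟩))
    · exact Or.inl (plt_of_le i f hz (Or.inr (Or.inl ⟨rfl, a, rfl, d, h1, h2, h3.symm⟩)))
    · exact Or.inl (plt_of_le i f hz (Or.inr (Or.inr ⟨rfl, a, rfl, p, q, s, h1, h2, h3⟩)))

/-- The set of second coordinates of elements of `↓x` in column `c`. -/
def colset (x : PP) (c : ℕ+) : Set LL := {z | Ple i f (c, z) x}

/-- Each column of a principal ideal is empty or a principal downset of `L`, and only
finitely many columns are nonempty. -/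
theorem col_classify (h : GoodData i f) (x : PP) :
    (∀ c, (∃ w, colset i f x c = ldown w) ∨ colset i f x c = ∅) ∧
    ∃ F : Finset ℕ+, ∀ c, c ∉ F → colset i f x c = ∅ := by
  obtain ⟨m, x2⟩ := x
  by_cases hx : x2 = LL.top
  case neg =>
    have hcol : ∀ c, colset i f (m, x2) c = if c = m then ldown x2 else ∅ := by
      intro c
      ext z
      simp only [colset, Set.mem_setOf_eq, ple_nontop_iff i f hx]
      by_cases hcm : c = m
      · simp [hcm, ldown]
      · simp [hcm]
    constructor
    · intro c
      rw [hcol c]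
      by_cases hcm : c = m
      · exact Or.inl ⟨x2, by simp [hcm]⟩
      · exact Or.inr (by simp [hcm])
    · exact ⟨{m}, fun c hc => by rw [hcol c]; simp only [Finset.mem_singleton] at hc; simp [hc]⟩
  case pos =>
    subst hx
    have hcolm : colset i f (m, .top) m = ldown .top := by
      ext z
      simp only [colset, Set.mem_setOf_eq, ldown_top, Set.mem_univ, iff_true]
      by_cases hz : z = LL.top
      · exact Or.inr (by rw [hz])
      · exact Or.inl (Or.inl ⟨rfl, LL.le_top' z, hz⟩)
    by_cases hQ : ∃ (p k : ℕ+) (s : FinSeq), p < k ∧ m ∈ i p k ∧ f p k s = m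
    case neg =>
      have hempty : ∀ c, c ≠ m → colset i f (m, .top) c = ∅ := by
        intro c hc
        ext z
        simp only [colset, Set.mem_setOf_eq, Set.mem_empty_iff_false, iff_false]
        intro hz
        rw [ple_top_iff i f m c hc z] at hz
        rcases hz with ⟨s, k, -, h1, h2, h3⟩ | ⟨a, d, -, h1, h2, h3⟩ |
          ⟨a, p, q, s, -, h1, h2, h3⟩
        · exact hQ ⟨c, k, s, h1, h2, h3⟩
        · exact hQ ⟨d, c, FinSeq.single a, h1, h2, h3⟩
        · exact hQ ⟨p, q, FinSeq.snoc s a, h1, (h.range p q h1) ▸ ⟨_, h3⟩, h3⟩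
      constructor
      · intro c
        by_cases hcm : c = m
        · subst hcm; exact Or.inl ⟨.top, hcolm⟩
        · exact Or.inr (hempty c hcm)
      · exact ⟨{m}, fun c hc => hempty c (by simpa using hc)⟩
    case pos =>
      obtain ⟨p, k, s, hpk, hmem, hfs⟩ := hQ
      have hkm : k < m := h.lower p k hpk m hmem
      have hpm : p ≠ m := ne_of_lt (hpk.trans hkm)
      have hkm' : k ≠ m := ne_of_lt hkm
      have hpkne : p ≠ k := ne_of_lt hpk
      have huniq : ∀ {a b : ℕ+} {t : FinSeq}, a < b → m ∈ i a b → f a b t = m →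
          a = p ∧ b = k ∧ t = s := fun h1 h2 h3 => h.uniq i f h1 h2 h3 hpk hmem hfs
      have hrange : ∀ t : FinSeq, f p k t ∈ i p k := fun t => (h.range p k hpk) ▸ ⟨t, rfl⟩
      have hlt4mem : ∀ {p' q' : ℕ+} {t : FinSeq}, p' < q' → f p' q' t = m →
          p' = p ∧ q' = k ∧ t = s :=
        fun h1 h3 => huniq h1 ((h.range _ _ h1) ▸ ⟨_, h3⟩) h3
      have hclass : ∀ c, c ≠ m →
          (∃ w, colset i f (m, .top) c = ldown w) ∨ colset i f (m, .top) c = ∅ ∧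
            (∀ (s' : FinSeq) (a : ℕ+), s = FinSeq.snoc s' a → f p k s' ≠ c) := by
        intro c hcm
        have hiff := fun z => ple_top_iff i f m c hcm z
        by_cases hcp : c = p
        · subst hcp
          left
          refine ⟨.seq s, ?_⟩
          ext z
          simp only [colset, ldown, Set.mem_setOf_eq]
          rw [hiff z]
          constructor
          · rintro (⟨s', k', hz, h1, h2, h3⟩ | ⟨a, d, hz, h1, h2, h3⟩ |
              ⟨a, p', q', s', hz, h1, h2, h3⟩)
            · obtain ⟨-, -, hs'⟩ := huniq h1 h2 h3
              rw [hs'] at hz; exact hz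
            · exact absurd (huniq h1 h2 h3).2.1 hpkne
            · obtain ⟨hp', hq', -⟩ := hlt4mem h1 h3
              rw [hp', hq'] at h2
              have hmem' := hrange s'
              rw [h2] at hmem'
              exact absurd (h.lower c k hpk c hmem') (lt_asymm hpk)
          · intro hz
            exact Or.inl ⟨s, k, hz, hpk, hmem, hfs⟩
        by_cases hck : c = k
        · subst hck
          by_cases hA : ∃ a, s = FinSeq.single a
          · obtain ⟨a, ha⟩ := hA
            left
            refine ⟨.nat a, ?_⟩
            ext z
            simp only [colset, ldown, Set.mem_setOf_eq]
            rw [hiff z]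
            constructor
            · rintro (⟨s', k', hz, h1, h2, h3⟩ | ⟨a', d, hz, h1, h2, h3⟩ |
                ⟨a', p', q', s', hz, h1, h2, h3⟩)
              · exact absurd (huniq h1 h2 h3).1 (Ne.symm hpkne)
              · obtain ⟨-, -, hs'⟩ := huniq h1 h2 h3
                rw [ha] at hs'
                rw [FinSeq.single_inj hs'] at hz
                exact hz
              · obtain ⟨hp', hq', -⟩ := hlt4mem h1 h3
                rw [hp', hq'] at h2
                have hmem' := hrange s'
                rw [h2] at hmem'
                exact absurd (h.lower p c hpk c hmem') (lt_irrefl c)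
            · intro hz
              exact Or.inr (Or.inl ⟨a, p, hz, hpk, hmem, by rw [← ha]; exact hfs⟩)
          · right
            constructor
            · ext z
              simp only [colset, Set.mem_setOf_eq, Set.mem_empty_iff_false, iff_false]
              intro hz
              rw [hiff z] at hz
              rcases hz with ⟨s', k', hz, h1, h2, h3⟩ | ⟨a', d, hz, h1, h2, h3⟩ |
                ⟨a', p', q', s', hz, h1, h2, h3⟩
              · exact absurd (huniq h1 h2 h3).1 (Ne.symm hpkne)
              · exact hA ⟨a', ((huniq h1 h2 h3).2.2).symm⟩
              · obtain ⟨hp', hq', -⟩ := hlt4mem h1 h3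
                rw [hp', hq'] at h2
                have hmem' := hrange s'
                rw [h2] at hmem'
                exact absurd (h.lower p c hpk c hmem') (lt_irrefl c)
            · intro s' a hsa hfc
              have hmem' := hrange s'
              rw [hfc] at hmem'
              exact absurd (h.lower p c hpk c hmem') (lt_irrefl c)
        by_cases hB : ∃ (s' : FinSeq) (a : ℕ+), s = FinSeq.snoc s' a ∧ f p k s' = c
        · obtain ⟨s', a, hsa, hfc⟩ := hB
          left
          refine ⟨.nat a, ?_⟩
          ext z
          simp only [colset, ldown, Set.mem_setOf_eq]
          rw [hiff z]
          constructor
          · rintro (⟨s'', k', hz, h1, h2, h3⟩ | ⟨a', d, hz, h1, h2, h3⟩ |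
              ⟨a', p', q', s'', hz, h1, h2, h3⟩)
            · exact absurd (huniq h1 h2 h3).1 hcp
            · exact absurd (huniq h1 h2 h3).2.1 hck
            · obtain ⟨hp', hq', hsnoc⟩ := hlt4mem h1 h3
              rw [hp', hq'] at h2
              rw [hsa] at hsnoc
              rw [(FinSeq.snoc_inj hsnoc).2] at hz
              exact hz
          · intro hz
            exact Or.inr (Or.inr ⟨a, p, k, s', hz, hpk, hfc, by rw [← hsa]; exact hfs⟩)
        · right
          constructor
          · ext z
            simp only [colset, Set.mem_setOf_eq, Set.mem_empty_iff_false, iff_false]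
            intro hz
            rw [hiff z] at hz
            rcases hz with ⟨s', k', hz, h1, h2, h3⟩ | ⟨a', d, hz, h1, h2, h3⟩ |
              ⟨a', p', q', s'', hz, h1, h2, h3⟩
            · exact absurd (huniq h1 h2 h3).1 hcp
            · exact absurd (huniq h1 h2 h3).2.1 hck
            · obtain ⟨hp', hq', hsnoc⟩ := hlt4mem h1 h3
              rw [hp', hq'] at h2
              exact hB ⟨s'', a', hsnoc.symm, h2⟩
          · intro s' a hsa hfc
            exact hB ⟨s', a, hsa, hfc⟩
      constructor
      · intro c
        by_cases hcm : c = m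
        · subst hcm; exact Or.inl ⟨.top, hcolm⟩
        · rcases hclass c hcm with hl | ⟨he, -⟩
          · exact Or.inl hl
          · exact Or.inr he
      · classical
        refine ⟨insert m (insert p (insert k
            (if hB : ∃ (s' : FinSeq) (a : ℕ+), s = FinSeq.snoc s' a
              then {f p k hB.choose} else ∅))), fun c hc => ?_⟩
        simp only [Finset.mem_insert] at hc
        push_neg at hc
        obtain ⟨hcm, hcp, hck, hcr⟩ := hc
        rcases hclass c hcm with ⟨w, hw⟩ | ⟨he, hne4⟩
        · exfalso
          -- show c must then be one of m, p, k, or the lt4 column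
          have hzw0 : w ∈ colset i f (m, .top) c := by rw [hw]; exact self_mem_ldown w
          have hzw : Ple i f (c, w) (m, .top) := hzw0
          rw [ple_top_iff i f m c hcm w] at hzw
          rcases hzw with ⟨s', k', hz, h1, h2, h3⟩ | ⟨a', d, hz, h1, h2, h3⟩ |
            ⟨a', p', q', s'', hz, h1, h2, h3⟩
          · exact hcp (huniq h1 h2 h3).1
          · exact hck (huniq h1 h2 h3).2.1
          · obtain ⟨hp', hq', hsnoc⟩ := hlt4mem h1 h3
            rw [hp', hq'] at h2
            have hBex : ∃ (s' : FinSeq) (a : ℕ+), s = FinSeq.snoc s' a := ⟨s'', a', hsnoc.symm⟩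
            rw [dif_pos hBex] at hcr
            obtain ⟨a0, ha0⟩ := hBex.choose_spec
            have : hBex.choose = s'' := by
              have := ha0.symm.trans hsnoc.symm
              exact (FinSeq.snoc_inj this).1
            apply hcr
            simp only [Finset.mem_singleton]
            rw [this, h2]
        · exact he
  
/-- A nonempty intersection of columns is empty or a principal downset of `L`. -/
theorem inter_col (h : GoodData i f) (E : Set PP) (hne : E.Nonempty) (c : ℕ+) :
    (∃ w, {z : LL | ∀ x ∈ E, Ple i f (c, z) x} = ldown w) ∨
      {z : LL | ∀ x ∈ E, Ple i f (c, z) x} = ∅ := by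
  by_cases hBne : ({z : LL | ∀ x ∈ E, Ple i f (c, z) x}).Nonempty
  case neg => exact Or.inr (Set.not_nonempty_iff_eq_empty.1 hBne)
  obtain ⟨z₀, hz₀⟩ := hBne
  replace hz₀ : ∀ x ∈ E, Ple i f (c, z₀) x := hz₀
  have hcol : ∀ x ∈ E, ∃ w, colset i f x c = ldown w := by
    intro x hx
    rcases (col_classify i f h x).1 c with hw | hw
    · exact hw
    · exfalso
      have hmem : z₀ ∈ colset i f x c := hz₀ x hx
      rw [hw] at hmem
      exact hmem
  have hdc : ∀ z z' : LL, LL.le z z' → (∀ x ∈ E, Ple i f (c, z') x) →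
      ∀ x ∈ E, Ple i f (c, z) x := by
    intro z z' hle hz' x hx
    obtain ⟨w, hw⟩ := hcol x hx
    have h1 : z' ∈ colset i f x c := hz' x hx
    rw [hw] at h1
    have h2 : z ∈ ldown w := LL.le_trans' hle h1
    rw [← hw] at h2
    exact h2
  by_cases htop : ∀ x ∈ E, Ple i f (c, LL.top) x
  · refine Or.inl ⟨.top, ?_⟩
    ext z
    simp only [Set.mem_setOf_eq, ldown_top, Set.mem_univ, iff_true]
    exact hdc z .top (LL.le_top' z) htop
  · have hex : ∃ x ∈ E, ∃ w, w ≠ LL.top ∧ colset i f x c = ldown w := by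
      by_contra hcon
      push_neg at hcon
      apply htop
      intro x hx
      obtain ⟨w, hw⟩ := hcol x hx
      have hwt : w = LL.top := by
        by_contra hne'
        exact (hcon x hx w hne') hw
      have hmem : LL.top ∈ ldown w := by rw [hwt]; exact self_mem_ldown _
      rw [← hw] at hmem
      exact hmem
    obtain ⟨x₁, hx₁, w₁, hw₁ne, hw₁⟩ := hex
    have hBsub : {z : LL | ∀ x ∈ E, Ple i f (c, z) x} ⊆ ldown w₁ := by
      intro z hz
      have hmem : z ∈ colset i f x₁ c := hz x₁ hx₁
      rw [hw₁] at hmem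
      exact hmem
    have hBfin : ({z : LL | ∀ x ∈ E, Ple i f (c, z) x}).Finite :=
      (ldown_finite hw₁ne).subset hBsub
    obtain ⟨mx, hmxB, hmax0⟩ := hBfin.exists_maximalFor id _ ⟨z₀, hz₀⟩
    have hmax : ∀ z ∈ {z : LL | ∀ x ∈ E, Ple i f (c, z) x}, id mx ≤ id z → id mx = id z :=
      fun z hz hle => le_antisymm hle (hmax0 hz hle)
    refine Or.inl ⟨mx, ?_⟩
    ext z
    simp only [Set.mem_setOf_eq]
    constructor
    · intro hz
      rcases ldown_comparable hw₁ne (hBsub hz) (hBsub hmxB) with hle | hle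
      · exact hle
      · have hzz : id mx = id z := hmax z hz hle
        simp only [id] at hzz
        show LL.le z mx
        cases hzz
        exact LL.le_refl' _
    · intro hz
      exact hdc z mx hz hmxB

end Aux

/-- Finite unions of column downsets. -/
def gset (u : Finset (ℕ+ × LL)) : Set PP := {y | ∃ p ∈ u, y.1 = p.1 ∧ LL.le y.2 p.2}

theorem MM_countable (i : ℕ+ → ℕ+ → Set ℕ+) (f : ℕ+ → ℕ+ → FinSeq → ℕ+)
    (h : GoodData i f) : (MM i f).Countable := by
  classical
  have hsub : MM i f ⊆ insert Set.univ (Set.range gset) := by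
    rintro S ⟨E, rfl⟩
    rcases Set.eq_empty_or_nonempty E with rfl | hEne
    · refine Set.mem_insert_iff.2 (Or.inl ?_)
      simp
    · refine Set.mem_insert_iff.2 (Or.inr ?_)
      have hBcl := fun c => inter_col i f h E hEne c
      obtain ⟨x₀, hx₀⟩ := hEne
      obtain ⟨F₀, hF₀⟩ := (col_classify i f h x₀).2
      have hsupp : ∀ c : ℕ+, ({z : LL | ∀ x ∈ E, Ple i f (c, z) x}).Nonempty → c ∈ F₀ := by
        rintro c ⟨z, hz⟩
        by_contra hc
        have he := hF₀ c hc
        have hmem : z ∈ colset i f x₀ c := hz x₀ hx₀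
        rw [he] at hmem
        exact hmem
      set wf : ℕ+ → LL := fun c =>
        if hc : ∃ w, {z : LL | ∀ x ∈ E, Ple i f (c, z) x} = ldown w then hc.choose else .top
        with hwf
      have hwfspec : ∀ c : ℕ+, ({z : LL | ∀ x ∈ E, Ple i f (c, z) x}).Nonempty →
          {z : LL | ∀ x ∈ E, Ple i f (c, z) x} = ldown (wf c) := by
        intro c hcne
        have hc : ∃ w, {z : LL | ∀ x ∈ E, Ple i f (c, z) x} = ldown w := by
          rcases hBcl c with hw | hw
          · exact hw
          · rw [hw] at hcne; exact absurd hcne Set.not_nonempty_empty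
        rw [hwf]
        simp only [dif_pos hc]
        exact hc.choose_spec
      refine ⟨(F₀.filter
        (fun c => ({z : LL | ∀ x ∈ E, Ple i f (c, z) x}).Nonempty)).image
        (fun c => (c, wf c)), ?_⟩
      ext ⟨y1, y2⟩
      simp only [gset, Set.mem_setOf_eq, Set.mem_iInter]
      constructor
      · rintro ⟨pp, hpp, hy1, hy2⟩
        obtain ⟨c, hcf, rfl⟩ := Finset.mem_image.1 hpp
        obtain ⟨-, hcne⟩ := Finset.mem_filter.1 hcf
        have heq := hwfspec c hcne
        have hy2' : y2 ∈ ldown (wf c) := hy2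
        rw [← heq] at hy2'
        intro x hx
        have := hy2' x hx
        have hfst : y1 = c := hy1
        rw [hfst]
        exact this
      · intro hy
        have hy' : ∀ x ∈ E, Ple i f (y1, y2) x := by
          intro x hx
          exact hy x hx
        have hne' : ({z : LL | ∀ x ∈ E, Ple i f (y1, z) x}).Nonempty := ⟨y2, hy'⟩
        have heq := hwfspec y1 hne'
        have hy2m : y2 ∈ ldown (wf y1) := by rw [← heq]; exact hy'
        exact ⟨(y1, wf y1), Finset.mem_image.2
          ⟨y1, Finset.mem_filter.2 ⟨hsupp y1 hne', hne'⟩, rfl⟩, rfl, hy2m⟩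
  exact Set.Countable.mono hsub ((Set.countable_range gset).insert Set.univ)


/-- `M`, ordered by inclusion, is a countable bounded complete dcpo: every directed subset
has a supremum, every subset bounded above has a supremum, and `M` is countable. -/
theorem MM_countable_boundedComplete_dcpo (i : ℕ+ → ℕ+ → Set ℕ+)
    (f : ℕ+ → ℕ+ → FinSeq → ℕ+) (h : GoodData i f) :
    (∀ D : Set ↥(MM i f), D.Nonempty → DirectedOn (· ≤ ·) D → ∃ a : ↥(MM i f), IsLUB D a) ∧
    (∀ S : Set ↥(MM i f), (∃ b : ↥(MM i f), ∀ x ∈ S, x ≤ b) → ∃ a : ↥(MM i f), IsLUB S a) ∧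
    (MM i f).Countable := by
  exact ⟨fun D _ _ => MM_exists_lub i f D, fun S _ => MM_exists_lub i f S,
    MM_countable i f h⟩
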